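/- Let T ≥ 1 and let β_1, …, β_T ∈ (0,1) be a variance schedule with α_t = 1 − β_t and ᾱ_t = ∏_{i=1}^t α_i. On a probability space, let ε_1, …, ε_T be independent real random variables each distributed as gaussianReal 0 1, let x₀ ∈ ℝ be a constant, and define recursively X_0 = x₀ and X_t = √(1−β_t)·X_{t−1} + √β_t·ε_t for 1 ≤ t ≤ T. Then for every 1 ≤ t ≤ T, the law of X_t is gaussianReal (√ᾱ_t·x₀) (1−ᾱ_t); i.e., the forward diffusion conditional marginal at any timestep has the closed form q(x_t | x₀) = N(√ᾱ_t·x₀, 1−ᾱ_t). -/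

import Mathlib

open Real MeasureTheory ProbabilityTheory Finset NNReal ENNReal

section aux
open Real MeasureTheory ProbabilityTheory

lemma my_pdf_conv (m₁ m₂ : ℝ) (v₁ v₂ : ℝ≥0) (hv₁ : v₁ ≠ 0) (hv₂ : v₂ ≠ 0) (z x : ℝ) :
    gaussianPDFReal m₁ v₁ x * gaussianPDFReal m₂ v₂ (z - x)
      = gaussianPDFReal (m₁ + m₂) (v₁ + v₂) z *
        gaussianPDFReal ((v₂ * m₁ + v₁ * (z - m₂)) / (v₁ + v₂)) (v₁ * v₂ / (v₁ + v₂)) x := by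
  have ha : (0:ℝ) < v₁ := by positivity
  have hb : (0:ℝ) < v₂ := by positivity
  have ha' : (v₁:ℝ) ≠ 0 := ha.ne'
  have hb' : (v₂:ℝ) ≠ 0 := hb.ne'
  have hs : (0:ℝ) < (v₁:ℝ) + v₂ := by linarith
  have hw : ((v₁ * v₂ / (v₁ + v₂) : ℝ≥0) : ℝ) = (v₁:ℝ) * v₂ / ((v₁:ℝ) + v₂) := by push_cast; ring
  simp only [gaussianPDFReal, NNReal.coe_add, hw]
  rw [mul_mul_mul_comm, mul_mul_mul_comm ((√(2 * π * ((v₁:ℝ) + v₂)))⁻¹), ← mul_inv, ← mul_inv,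
    ← Real.exp_add, ← Real.exp_add, ← Real.sqrt_mul (by positivity), ← Real.sqrt_mul (by positivity)]
  congr 2
  · congr 1
    field_simp
  · field_simp
    ring

lemma my_pdf_conv_lintegral (m₁ m₂ : ℝ) (v₁ v₂ : ℝ≥0) (hv₁ : v₁ ≠ 0) (hv₂ : v₂ ≠ 0) (z : ℝ) :
    ∫⁻ x, gaussianPDF m₁ v₁ x * gaussianPDF m₂ v₂ (z - x)
      = gaussianPDF (m₁ + m₂) (v₁ + v₂) z := by
  have hw : v₁ * v₂ / (v₁ + v₂) ≠ 0 := by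
    refine div_ne_zero (mul_ne_zero hv₁ hv₂) ?_
    simp [hv₁]
  calc ∫⁻ x, gaussianPDF m₁ v₁ x * gaussianPDF m₂ v₂ (z - x)
      = ∫⁻ x, ENNReal.ofReal (gaussianPDFReal (m₁ + m₂) (v₁ + v₂) z) *
          ENNReal.ofReal (gaussianPDFReal ((v₂ * m₁ + v₁ * (z - m₂)) / (v₁ + v₂))
            (v₁ * v₂ / (v₁ + v₂)) x) := by
        congr 1 with x
        rw [gaussianPDF, gaussianPDF, ← ENNReal.ofReal_mul (gaussianPDFReal_nonneg _ _ _),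
          my_pdf_conv m₁ m₂ v₁ v₂ hv₁ hv₂ z x,
          ENNReal.ofReal_mul (gaussianPDFReal_nonneg _ _ _)]
    _ = ENNReal.ofReal (gaussianPDFReal (m₁ + m₂) (v₁ + v₂) z) *
          ∫⁻ x, ENNReal.ofReal (gaussianPDFReal ((v₂ * m₁ + v₁ * (z - m₂)) / (v₁ + v₂))
            (v₁ * v₂ / (v₁ + v₂)) x) := by
        rw [lintegral_const_mul _ ((measurable_gaussianPDFReal _ _).ennreal_ofReal)]
    _ = gaussianPDF (m₁ + m₂) (v₁ + v₂) z := by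
        rw [lintegral_gaussianPDFReal_eq_one _ hw, mul_one, gaussianPDF]

lemma my_map_add_withDensity (f g : ℝ → ℝ≥0∞) (hf : Measurable f) (hg : Measurable g) :
    Measure.map (fun p : ℝ × ℝ => p.1 + p.2)
        ((volume.withDensity f).prod (volume.withDensity g))
      = volume.withDensity (fun z => ∫⁻ x, f x * g (z - x)) := by
  have hgsub : Measurable (fun q : ℝ × ℝ => f q.2 * g (q.1 - q.2)) :=
    (hf.comp measurable_snd).mul (hg.comp (measurable_fst.sub measurable_snd))
  refine Measure.ext fun s hs => ?_
  rw [Measure.map_apply measurable_add hs, withDensity_apply _ hs,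
    Measure.prod_apply (measurable_add hs)]
  have h1 : ∀ x : ℝ, (volume.withDensity g) (Prod.mk x ⁻¹' ((fun p : ℝ × ℝ => p.1 + p.2) ⁻¹' s))
      = ∫⁻ z, s.indicator (fun _ => (1:ℝ≥0∞)) z * g (z - x) := by
    intro x
    have hpre : Prod.mk x ⁻¹' ((fun p : ℝ × ℝ => p.1 + p.2) ⁻¹' s) = (fun y => x + y) ⁻¹' s := rfl
    rw [hpre, withDensity_apply _ (measurable_const_add x hs), ← lintegral_indicator (measurable_const_add x hs) _]
    have : ∀ y : ℝ, ((fun y => x + y) ⁻¹' s).indicator g y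
        = (fun z => s.indicator (fun _ => (1:ℝ≥0∞)) z * g (z - x)) (x + y) := by
      intro y
      simp only [Set.indicator_apply, Set.mem_preimage, add_sub_cancel_left]
      by_cases h : x + y ∈ s <;> simp [h]
    simp_rw [this]
    exact lintegral_add_left_eq_self (fun z => s.indicator (fun _ => (1:ℝ≥0∞)) z * g (z - x)) x
  simp_rw [h1]
  have hind : Measurable (s.indicator (fun _ : ℝ => (1:ℝ≥0∞))) := measurable_const.indicator hs
  rw [lintegral_withDensity_eq_lintegral_mul _ hf]
  swap
  · exact Measurable.lintegral_prod_right ((hind.comp measurable_snd).mul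
      (hg.comp (measurable_snd.sub measurable_fst)))
  have h2 : ∀ x : ℝ, f x * ∫⁻ z, s.indicator (fun _ => (1:ℝ≥0∞)) z * g (z - x)
      = ∫⁻ z, s.indicator (fun _ => (1:ℝ≥0∞)) z * (f x * g (z - x)) := by
    intro x
    rw [← lintegral_const_mul _ (f := fun z => s.indicator (fun _ => (1:ℝ≥0∞)) z * g (z - x)) (hind.mul (show Measurable fun z : ℝ => g (z - x) by fun_prop))]
    congr 1 with z
    ring
  simp only [Pi.mul_apply]
  simp only [h2]
  rw [lintegral_lintegral_swap]
  · rw [← lintegral_indicator hs _]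
    congr 1 with z
    rw [lintegral_const_mul _ (show Measurable fun x : ℝ => f x * g (z - x) by fun_prop)]
    by_cases h : z ∈ s <;> simp [h]
  · exact (((hind.comp measurable_snd).mul
      ((hf.comp measurable_fst).mul (hg.comp (measurable_snd.sub measurable_fst)))).aemeasurable)

lemma my_gaussian_conv (m₁ m₂ : ℝ) (v₁ v₂ : ℝ≥0) :
    Measure.map (fun p : ℝ × ℝ => p.1 + p.2)
        ((gaussianReal m₁ v₁).prod (gaussianReal m₂ v₂))
      = gaussianReal (m₁ + m₂) (v₁ + v₂) := by
  by_cases hv₁ : v₁ = 0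
  · subst hv₁
    rw [gaussianReal_zero_var, Measure.dirac_prod,
      Measure.map_map measurable_add measurable_prodMk_left]
    have : ((fun p : ℝ × ℝ => p.1 + p.2) ∘ Prod.mk m₁) = (fun y => m₁ + y) := rfl
    rw [this, gaussianReal_map_const_add, zero_add, add_comm m₂ m₁]
  by_cases hv₂ : v₂ = 0
  · subst hv₂
    rw [gaussianReal_zero_var, Measure.prod_dirac,
      Measure.map_map measurable_add measurable_prodMk_right]
    have : ((fun p : ℝ × ℝ => p.1 + p.2) ∘ (fun x => (x, m₂))) = (fun x => x + m₂) := rfl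
    rw [this, gaussianReal_map_add_const, add_zero]
  rw [gaussianReal_of_var_ne_zero _ hv₁, gaussianReal_of_var_ne_zero _ hv₂,
    my_map_add_withDensity _ _ (measurable_gaussianPDF _ _) (measurable_gaussianPDF _ _),
    gaussianReal_of_var_ne_zero _ (by simp [hv₁] : v₁ + v₂ ≠ 0)]
  congr 1 with z
  exact my_pdf_conv_lintegral m₁ m₂ v₁ v₂ hv₁ hv₂ z

lemma my_indep_gaussian_add {Ω : Type*} [MeasurableSpace Ω] (P : Measure Ω)
    [IsProbabilityMeasure P] {X Y : Ω → ℝ} (hX : Measurable X) (hY : Measurable Y)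
    (h : IndepFun X Y P) {m₁ m₂ : ℝ} {v₁ v₂ : ℝ≥0}
    (hXl : P.map X = gaussianReal m₁ v₁) (hYl : P.map Y = gaussianReal m₂ v₂) :
    P.map (fun ω => X ω + Y ω) = gaussianReal (m₁ + m₂) (v₁ + v₂) := by
  have hpair : P.map (fun ω => (X ω, Y ω)) = (P.map X).prod (P.map Y) :=
    (indepFun_iff_map_prod_eq_prod_map_map hX.aemeasurable hY.aemeasurable).mp h
  have : (fun ω => X ω + Y ω) = (fun p : ℝ × ℝ => p.1 + p.2) ∘ (fun ω => (X ω, Y ω)) := rfl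
  rw [this, ← Measure.map_map measurable_add (hX.prodMk hY), hpair, hXl, hYl,
    my_gaussian_conv]

end aux

/-- Closed form of the forward diffusion conditional marginal: if
`X_t = √(1−β_t)·X_{t−1} + √β_t·ε_t` with `X_0 = x₀` and i.i.d. standard Gaussian
noise `ε_t`, then the law of `X_t` is `N(√ᾱ_t·x₀, 1−ᾱ_t)` where
`ᾱ_t = ∏_{i=1}^t (1−β_i)`. -/
theorem forward_diffusion_marginal_closed_form
    {Ω : Type*} [MeasurableSpace Ω] (P : Measure Ω) [IsProbabilityMeasure P]
    (T : ℕ) (hT : 1 ≤ T)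
    (β : ℕ → ℝ) (hβ : ∀ t, 1 ≤ t → t ≤ T → β t ∈ Set.Ioo (0 : ℝ) 1)
    (ε : ℕ → Ω → ℝ) (hεmeas : ∀ t, Measurable (ε t))
    (hεindep : iIndepFun ε P)
    (hεlaw : ∀ t, P.map (ε t) = gaussianReal 0 1)
    (x₀ : ℝ) (X : ℕ → Ω → ℝ)
    (hX0 : X 0 = fun _ => x₀)
    (hXrec : ∀ t, 1 ≤ t → t ≤ T →
      X t = fun ω => Real.sqrt (1 - β t) * X (t - 1) ω + Real.sqrt (β t) * ε t ω) :
    ∀ t, 1 ≤ t → t ≤ T →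
      P.map (X t) =
        gaussianReal (Real.sqrt (∏ i ∈ Finset.Icc 1 t, (1 - β i)) * x₀)
          (1 - ∏ i ∈ Finset.Icc 1 t, (1 - β i)).toNNReal := by
  have hrep : ∀ s, s ≤ T → ∃ φ : ((Finset.Icc 1 s : Finset ℕ) → ℝ) → ℝ,
      Measurable φ ∧ ∀ ω, X s ω = φ (fun i => ε i ω) := by
    intro s
    induction s with
    | zero => exact fun _ => ⟨fun _ => x₀, measurable_const, fun ω => by rw [hX0]⟩
    | succ n ih =>
      intro hsT
      obtain ⟨φ, hφm, hφ⟩ := ih (by omega)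
      have hmem : ∀ i : (Finset.Icc 1 n : Finset ℕ), (i : ℕ) ∈ Finset.Icc 1 (n+1) := by
        intro i
        have := i.2
        simp only [Finset.mem_Icc] at this ⊢
        omega
      refine ⟨fun v => Real.sqrt (1 - β (n+1)) * φ (fun i => v ⟨i, hmem i⟩)
        + Real.sqrt (β (n+1)) * v ⟨n+1, by simp⟩, ?_, ?_⟩
      · exact ((hφm.comp (measurable_pi_lambda _ fun i => measurable_pi_apply _)).const_mul _).add
          ((measurable_pi_apply _).const_mul _)
      · intro ω
        rw [hXrec (n+1) (by omega) hsT]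
        simp only [Nat.add_sub_cancel]
        rw [hφ ω]
  have hXmeas : ∀ s, s ≤ T → Measurable (X s) := by
    intro s hsT
    obtain ⟨φ, hφm, hφ⟩ := hrep s hsT
    rw [show X s = φ ∘ (fun ω (i : (Finset.Icc 1 s : Finset ℕ)) => ε i ω) from funext hφ]
    exact hφm.comp (measurable_pi_lambda _ fun i => hεmeas i)
  have hindep : ∀ s, s + 1 ≤ T → IndepFun (X s) (ε (s+1)) P := by
    intro s hsT
    obtain ⟨φ, hφm, hφ⟩ := hrep s (by omega)
    have hdisj : Disjoint (Finset.Icc 1 s) ({s+1} : Finset ℕ) := by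
      simp only [Finset.disjoint_singleton_right, Finset.mem_Icc]
      omega
    rw [show X s = φ ∘ (fun ω (i : (Finset.Icc 1 s : Finset ℕ)) => ε i ω) from funext hφ]
    exact (hεindep.indepFun_finset (Finset.Icc 1 s) {s+1} hdisj hεmeas).comp hφm
      (measurable_pi_apply (⟨s+1, by simp⟩ : (({s+1} : Finset ℕ) : Type)))
  have key : ∀ s, s ≤ T → P.map (X s) = gaussianReal
      (Real.sqrt (∏ i ∈ Finset.Icc 1 s, (1 - β i)) * x₀)
      (1 - ∏ i ∈ Finset.Icc 1 s, (1 - β i)).toNNReal := by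
    intro s
    induction s with
    | zero =>
      intro _
      rw [hX0]
      have he : Finset.Icc 1 0 = (∅ : Finset ℕ) := rfl
      rw [he]
      simp only [Finset.prod_empty, Real.sqrt_one, one_mul, sub_self, Real.toNNReal_zero]
      rw [gaussianReal_zero_var, Measure.map_const]
      simp
    | succ n ih =>
      intro hsT
      have ihn := ih (by omega)
      have hβn := hβ (n+1) (by omega) hsT
      have hApos : 0 < ∏ i ∈ Finset.Icc 1 n, (1 - β i) := by
        refine Finset.prod_pos fun i hi => ?_
        have hi' := Finset.mem_Icc.mp hi
        have := hβ i hi'.1 (by omega)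
        linarith [this.2]
      have hAle : (∏ i ∈ Finset.Icc 1 n, (1 - β i)) ≤ 1 := by
        refine Finset.prod_le_one (fun i hi => ?_) (fun i hi => ?_)
        · have hi' := Finset.mem_Icc.mp hi
          have := hβ i hi'.1 (by omega)
          linarith [this.2]
        · have hi' := Finset.mem_Icc.mp hi
          have := hβ i hi'.1 (by omega)
          linarith [this.1]
      have hprod : ∏ i ∈ Finset.Icc 1 (n+1), (1 - β i)
          = (∏ i ∈ Finset.Icc 1 n, (1 - β i)) * (1 - β (n+1)) :=
        Finset.prod_Icc_succ_top (by omega) _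
      have h1 : P.map (fun ω => Real.sqrt (1 - β (n+1)) * X n ω)
          = gaussianReal
            (Real.sqrt (1 - β (n+1)) * (Real.sqrt (∏ i ∈ Finset.Icc 1 n, (1 - β i)) * x₀))
            (⟨(Real.sqrt (1 - β (n+1)))^2, sq_nonneg _⟩ *
              (1 - ∏ i ∈ Finset.Icc 1 n, (1 - β i)).toNNReal) := by
        rw [show (fun ω => Real.sqrt (1 - β (n+1)) * X n ω)
            = (Real.sqrt (1 - β (n+1)) * ·) ∘ X n from rfl,
          ← Measure.map_map (measurable_const_mul _) (hXmeas n (by omega)), ihn,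
          gaussianReal_map_const_mul]
        rfl
      have h2 : P.map (fun ω => Real.sqrt (β (n+1)) * ε (n+1) ω)
          = gaussianReal (Real.sqrt (β (n+1)) * 0)
            (⟨(Real.sqrt (β (n+1)))^2, sq_nonneg _⟩ * 1) := by
        rw [show (fun ω => Real.sqrt (β (n+1)) * ε (n+1) ω)
            = (Real.sqrt (β (n+1)) * ·) ∘ ε (n+1) from rfl,
          ← Measure.map_map (measurable_const_mul _) (hεmeas (n+1)), hεlaw,
          gaussianReal_map_const_mul]
        rfl
      have h3 := my_indep_gaussian_add P ((hXmeas n (by omega)).const_mul _)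
        ((hεmeas (n+1)).const_mul _)
        ((hindep n hsT).comp (measurable_const_mul _) (measurable_const_mul _)) h1 h2
      rw [hXrec (n+1) (by omega) hsT]
      simp only [Nat.add_sub_cancel]
      rw [h3]
      have hm : Real.sqrt (1 - β (n+1)) * (Real.sqrt (∏ i ∈ Finset.Icc 1 n, (1 - β i)) * x₀)
            + Real.sqrt (β (n+1)) * 0
          = Real.sqrt (∏ i ∈ Finset.Icc 1 (n+1), (1 - β i)) * x₀ := by
        rw [hprod, Real.sqrt_mul hApos.le]
        ring
      have hv : (⟨(Real.sqrt (1 - β (n+1)))^2, sq_nonneg _⟩ *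
            (1 - ∏ i ∈ Finset.Icc 1 n, (1 - β i)).toNNReal
            + ⟨(Real.sqrt (β (n+1)))^2, sq_nonneg _⟩ * 1 : ℝ≥0)
          = (1 - ∏ i ∈ Finset.Icc 1 (n+1), (1 - β i)).toNNReal := by
        apply NNReal.coe_injective
        show (Real.sqrt (1 - β (n+1)))^2 * ((1 - ∏ i ∈ Finset.Icc 1 n, (1 - β i)).toNNReal : ℝ)
            + (Real.sqrt (β (n+1)))^2 * 1 = ((1 - ∏ i ∈ Finset.Icc 1 (n+1), (1 - β i)).toNNReal : ℝ)
        rw [hprod]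
        push_cast
        rw [Real.sq_sqrt (by linarith [hβn.2]), Real.sq_sqrt (by linarith [hβn.1]),
          Real.coe_toNNReal _ (by linarith), Real.coe_toNNReal _ (by nlinarith [hβn.1, hβn.2])]
        ring
      rw [hm, hv]
  intro t ht1 ht2
  exact key t ht2
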